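/- If a topological dynamical system (X, T) has the periodic specification property, then the set M_T^co(X) of T-invariant Borel probability measures supported on a single periodic orbit is dense in M_T(X) with respect to the weak* topology. -/

import Mathlib

open MeasureTheory Filter Topology
open scoped ENNReal NNReal

noncomputable section

/-- The set of invariant Borel probability measures of a map. -/
def invMeas {Z : Type*} [MeasurableSpace Z] (U : Z → Z) : Set (ProbabilityMeasure Z) :=
  {μ | μ.toMeasure.map U = μ.toMeasure}

/-- The invariant probability measures supported on a single closed (periodic) orbit:
`M_T^co(X) = { (1/k) Σ_{j<k} δ_{T^j x} : k ∈ ℕ, T^k x = x }`. -/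
def Mco {Z : Type*} [MeasurableSpace Z] (U : Z → Z) : Set (ProbabilityMeasure Z) :=
  {μ | ∃ (k : ℕ) (z : Z), 0 < k ∧ U^[k] z = z ∧
    μ.toMeasure = (k : ℝ≥0∞)⁻¹ • ∑ j ∈ Finset.range k, Measure.dirac (U^[j] z)}

/-- The `j`-th power (`j : ℤ`) of a homeomorphism, applied to a point. -/
def zit {X : Type*} [TopologicalSpace X] (T : X ≃ₜ X) (j : ℤ) (x : X) : X :=
  (T.toEquiv ^ j) x

/-- The periodic specification property for `(X, T)` (with respect to the metric of
`X`): for every `η > 0` there is `D = D(η) ∈ ℕ` such that every `D`-spaced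
specification `ξ = (x_i, [a_i, b_i])_{i=1}^n` admits an `η`-tracing point of period
`b_n - a_1 + D`. -/
def PerSpecProp {X : Type*} [MetricSpace X] (T : X ≃ₜ X) : Prop :=
  ∀ η : ℝ, 0 < η → ∃ D : ℕ, 0 < D ∧
    ∀ (n : ℕ) (x : Fin (n + 1) → X) (a b : Fin (n + 1) → ℤ),
      (∀ i, a i ≤ b i) →
      (∀ i : Fin n, (D : ℤ) ≤ a i.succ - b i.castSucc) →
      ∃ x' : X, (∀ i : Fin (n + 1), ∀ j : ℤ, a i ≤ j → j ≤ b i →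
          dist (zit T j x') (zit T j (x i)) < η) ∧
        zit T (b (Fin.last n) - a 0 + (D : ℤ)) x' = x'

/-! ### Auxiliary lemmas -/

section Aux

open BoundedContinuousFunction

/-- Closure criterion for the weak* topology on probability measures. -/
theorem pm_mem_closure' {X : Type*} [MetricSpace X] [MeasurableSpace X] [OpensMeasurableSpace X]
    (μ : ProbabilityMeasure X) (S : Set (ProbabilityMeasure X))
    (h : ∀ (F : Finset (X →ᵇ ℝ)) (ε : ℝ), 0 < ε → ∃ ν ∈ S, ∀ f ∈ F,
      |∫ x, f x ∂(ν : Measure X) - ∫ x, f x ∂(μ : Measure X)| < ε) :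
    μ ∈ closure S := by
  classical
  set B : Finset (X →ᵇ ℝ) × {ε : ℝ // 0 < ε} → Set (ProbabilityMeasure X) := fun p =>
    S ∩ {ν | ∀ f ∈ p.1, |∫ x, f x ∂(ν : Measure X) - ∫ x, f x ∂(μ : Measure X)| < p.2.1} with hB
  have hne : ∀ p, (B p).Nonempty := by
    rintro ⟨F, ε, hε⟩
    obtain ⟨ν, hν, hν2⟩ := h F ε hε
    exact ⟨ν, hν, hν2⟩
  set G : Filter (ProbabilityMeasure X) := ⨅ p, 𝓟 (B p) with hG
  have hdir : Directed (· ≥ ·) fun p => 𝓟 (B p) := by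
    rintro ⟨F₁, ε₁, hε₁⟩ ⟨F₂, ε₂, hε₂⟩
    refine ⟨⟨F₁ ∪ F₂, ⟨min ε₁ ε₂, lt_min hε₁ hε₂⟩⟩, ?_, ?_⟩ <;>
    · simp only [ge_iff_le, Filter.principal_mono, hB]
      intro ν hν
      refine ⟨hν.1, fun f hf => ?_⟩
      · exact lt_of_lt_of_le (hν.2 f (by simp [Finset.mem_union, hf])) (by simp)
  haveI : Nonempty (ProbabilityMeasure X) := ⟨μ⟩
  haveI : G.NeBot := Filter.iInf_neBot_of_directed hdir fun p => by
    simpa [Filter.principal_neBot_iff] using hne p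
  have hmem : ∀ p, B p ∈ G := fun p => Filter.mem_iInf_of_mem p (Filter.mem_principal_self _)
  have hid : Tendsto id G (𝓝 μ) := by
    rw [ProbabilityMeasure.tendsto_iff_forall_integral_tendsto]
    intro f
    rw [Metric.tendsto_nhds]
    intro ε hε
    filter_upwards [hmem ⟨{f}, ⟨ε, hε⟩⟩] with ν hν
    simpa [Real.dist_eq] using hν.2 f (Finset.mem_singleton_self f)
  exact mem_closure_of_tendsto hid (by filter_upwards [hmem ⟨∅, ⟨1, one_pos⟩⟩] with ν hν using hν.1)

variable {X : Type*} [MetricSpace X] [CompactSpace X] [MeasurableSpace X] [BorelSpace X]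
  (T : X ≃ₜ X)

omit [CompactSpace X] [MeasurableSpace X] [BorelSpace X] in
lemma zit_natCast' (n : ℕ) (x : X) : zit T (n : ℤ) x = (⇑T)^[n] x := by
  rw [zit, zpow_natCast]
  exact (congrFun (Equiv.Perm.iterate_eq_pow T.toEquiv n) x).symm

omit [CompactSpace X] [MeasurableSpace X] [BorelSpace X] in
lemma zit_add' (p q : ℤ) (x : X) : zit T (p + q) x = zit T p (zit T q x) := by
  rw [zit, zit, zit, zpow_add]; rfl

omit [CompactSpace X] in
lemma map_iterate' (μ : Measure X) (h : μ.map ⇑T = μ) (n : ℕ) : μ.map ((⇑T)^[n]) = μ := by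
  induction n with
  | zero => simp [Function.iterate_zero, Measure.map_id]
  | succ k ih =>
    rw [Function.iterate_succ', ← Measure.map_map T.continuous.measurable
      ((T.continuous.iterate k).measurable), ih, h]

omit [CompactSpace X] in
lemma integral_iterate' (μ : Measure X) (h : μ.map ⇑T = μ) (n : ℕ) (f : X →ᵇ ℝ) :
    ∫ x, f ((⇑T)^[n] x) ∂μ = ∫ x, f x ∂μ := by
  conv_rhs => rw [← map_iterate' T μ h n]
  rw [integral_map (T.continuous.iterate n).measurable.aemeasurable
    f.continuous.aestronglyMeasurable]

omit [CompactSpace X] [BorelSpace X] in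
lemma per_prob' (x' : X) (P : ℕ) (hP : 0 < P) :
    IsProbabilityMeasure ((P : ℝ≥0∞)⁻¹ • ∑ j ∈ Finset.range P, Measure.dirac ((⇑T)^[j] x')) := by
  constructor
  rw [Measure.smul_apply, Measure.coe_finset_sum, Finset.sum_apply]
  simp only [Measure.dirac_apply_of_mem (Set.mem_univ _)]
  simp only [Finset.sum_const, Finset.card_range, nsmul_eq_mul, mul_one, smul_eq_mul]
  exact ENNReal.inv_mul_cancel (by exact_mod_cast hP.ne') (by simp)

lemma per_integral' (x' : X) (P : ℕ) (f : X →ᵇ ℝ) :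
    ∫ x, f x ∂((P : ℝ≥0∞)⁻¹ • ∑ j ∈ Finset.range P, Measure.dirac ((⇑T)^[j] x')) =
      (P : ℝ)⁻¹ * ∑ j ∈ Finset.range P, f ((⇑T)^[j] x') := by
  rw [integral_smul_measure, integral_finset_sum_measure (fun i _ => f.integrable _)]
  simp [integral_dirac, ENNReal.toReal_inv]

omit [CompactSpace X] [MeasurableSpace X] [BorelSpace X] in
lemma spec_apply' {T : X ≃ₜ X} {η : ℝ} {D : ℕ}
    (hs : ∀ (n : ℕ) (x : Fin (n + 1) → X) (a b : Fin (n + 1) → ℤ),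
      (∀ i, a i ≤ b i) →
      (∀ i : Fin n, (D : ℤ) ≤ a i.succ - b i.castSucc) →
      ∃ x' : X, (∀ i : Fin (n + 1), ∀ j : ℤ, a i ≤ j → j ≤ b i →
          dist (zit T j x') (zit T j (x i)) < η) ∧
        zit T (b (Fin.last n) - a 0 + (D : ℤ)) x' = x')
    (M N : ℕ) (hM : 0 < M) (hN : 0 < N) (y : Fin M → X) :
    ∃ x' : X, (∀ (i : Fin M) (t : ℕ), t < N →
        dist ((⇑T)^[(i : ℕ) * (N + D) + t] x') ((⇑T)^[t] (y i)) < η) ∧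
      (⇑T)^[M * (N + D) - 1] x' = x' := by
  obtain ⟨n, rfl⟩ := Nat.exists_eq_succ_of_ne_zero hM.ne'
  set a : Fin (n + 1) → ℤ := fun i => (i : ℕ) * (N + D)
  set b : Fin (n + 1) → ℤ := fun i => (i : ℕ) * (N + D) + N - 1
  have hab : ∀ i, a i ≤ b i := by
    intro i; simp only [a, b]; omega
  have hgap : ∀ i : Fin n, (D : ℤ) ≤ a i.succ - b i.castSucc := by
    intro i
    simp only [a, b, Fin.val_succ, Fin.coe_castSucc]
    push_cast
    ring_nf
    omega
  obtain ⟨x', htr, hper⟩ := hs n (fun i => zit T (-(a i)) (y i)) a b hab hgap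
  refine ⟨x', ?_, ?_⟩
  · intro i t ht
    have h1 : a i ≤ (((i : ℕ) * (N + D) + t : ℕ) : ℤ) := by simp only [a]; push_cast; omega
    have h2 : (((i : ℕ) * (N + D) + t : ℕ) : ℤ) ≤ b i := by simp only [b]; push_cast; omega
    have htr' := htr i (((i : ℕ) * (N + D) + t : ℕ) : ℤ) h1 h2
    rw [zit_natCast'] at htr'
    have key : zit T (((i : ℕ) * (N + D) + t : ℕ) : ℤ) (zit T (-(a i)) (y i)) =
        (⇑T)^[t] (y i) := by
      rw [← zit_add']
      have he : (((i : ℕ) * (N + D) + t : ℕ) : ℤ) + -(a i) = ((t : ℕ) : ℤ) := by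
        simp only [a]; push_cast; ring
      rw [he, zit_natCast']
    rwa [key] at htr'
  · have hPe : b (Fin.last n) - a 0 + (D : ℤ) = (((n + 1) * (N + D) - 1 : ℕ) : ℤ) := by
      simp only [a, b, Fin.val_last, Fin.val_zero]
      have h1 : 1 ≤ (n + 1) * (N + D) := Nat.one_le_iff_ne_zero.mpr (by positivity)
      push_cast [h1]
      ring
    rw [hPe, zit_natCast'] at hper
    exact hper

omit [CompactSpace X] [MeasurableSpace X] [BorelSpace X] in
lemma block_sum_est' (φ : X → ℝ) (Cf : ℝ) (hC : ∀ x, |φ x| ≤ Cf) (M N D : ℕ)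
    (hM : 0 < M) (hN : 0 < N) (hD : 0 < D) (x' : X) :
    |(∑ j ∈ Finset.range (M * (N + D) - 1), φ ((⇑T)^[j] x')) -
      ∑ i ∈ Finset.range M, ∑ t ∈ Finset.range N, φ ((⇑T)^[i * (N + D) + t] x')| ≤
    (M * D : ℝ) * Cf := by
  classical
  set P := M * (N + D) - 1 with hP
  set B : Finset ℕ := (Finset.range M ×ˢ Finset.range N).image fun p => p.1 * (N + D) + p.2
    with hBdef
  have hinj : Set.InjOn (fun p : ℕ × ℕ => p.1 * (N + D) + p.2)
      ↑(Finset.range M ×ˢ Finset.range N) := by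
    rintro ⟨i, t⟩ hp ⟨i', t'⟩ hq h
    simp only [Finset.coe_product, Set.mem_prod, Finset.mem_coe, Finset.mem_range] at hp hq
    simp only at h
    have hii : i = i' := by
      rcases Nat.lt_trichotomy i i' with hlt | he | hgt
      · exfalso; nlinarith [hp.2, hq.2, Nat.succ_le_of_lt hlt]
      · exact he
      · exfalso; nlinarith [hp.2, hq.2, Nat.succ_le_of_lt hgt]
    subst hii
    simp only [Prod.mk.injEq, true_and]
    omega
  have hBsub : B ⊆ Finset.range P := by
    intro j hj
    simp only [hBdef, Finset.mem_image, Finset.mem_product, Finset.mem_range] at hj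
    obtain ⟨⟨i, t⟩, ⟨hi, ht⟩, rfl⟩ := hj
    simp only [Finset.mem_range, hP]
    obtain ⟨m, rfl⟩ := Nat.exists_eq_succ_of_ne_zero hM.ne'
    have hle : i * (N + D) ≤ m * (N + D) :=
      Nat.mul_le_mul_right (N + D) (by omega)
    have h1 : m * (N + D) + (N + D) = (m + 1) * (N + D) := by ring
    have h2 : m.succ * (N + D) = m * (N + D) + (N + D) := by rw [Nat.succ_eq_add_one]; ring
    omega
  have hsum : ∑ j ∈ B, φ ((⇑T)^[j] x') =
      ∑ i ∈ Finset.range M, ∑ t ∈ Finset.range N, φ ((⇑T)^[i * (N + D) + t] x') := by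
    rw [hBdef, Finset.sum_image hinj, Finset.sum_product]
  have hsplit : ∑ j ∈ Finset.range P, φ ((⇑T)^[j] x') =
      (∑ j ∈ Finset.range P \ B, φ ((⇑T)^[j] x')) + ∑ j ∈ B, φ ((⇑T)^[j] x') :=
    (Finset.sum_sdiff hBsub).symm
  have hcardB : B.card = M * N := by
    rw [hBdef, Finset.card_image_of_injOn hinj, Finset.card_product, Finset.card_range,
      Finset.card_range]
  have hcard : ((Finset.range P \ B).card : ℝ) ≤ (M * D : ℝ) := by
    rw [Finset.card_sdiff_of_subset hBsub, Finset.card_range, hcardB]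
    have hnat : P - M * N ≤ M * D := by
      simp only [hP]
      have : M * (N + D) = M * N + M * D := by ring
      omega
    exact_mod_cast Nat.cast_le.mpr hnat
  have hCf0 : 0 ≤ Cf := le_trans (abs_nonneg _) (hC x')
  calc |(∑ j ∈ Finset.range P, φ ((⇑T)^[j] x')) - ∑ i ∈ Finset.range M, ∑ t ∈ Finset.range N,
        φ ((⇑T)^[i * (N + D) + t] x')|
      = |∑ j ∈ Finset.range P \ B, φ ((⇑T)^[j] x')| := by
        rw [hsplit, hsum, add_sub_cancel_right]
    _ ≤ ∑ j ∈ Finset.range P \ B, |φ ((⇑T)^[j] x')| := Finset.abs_sum_le_sum_abs _ _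
    _ ≤ ∑ _j ∈ Finset.range P \ B, Cf := Finset.sum_le_sum fun j _ => hC _
    _ = ((Finset.range P \ B).card : ℝ) * Cf := by rw [Finset.sum_const, nsmul_eq_mul]
    _ ≤ (M * D : ℝ) * Cf := mul_le_mul_of_nonneg_right hcard hCf0

lemma convex_round' (μ : ProbabilityMeasure X)
    (hμ : (μ : Measure X).map ⇑T = (μ : Measure X))
    (F : Finset (X →ᵇ ℝ)) (Cf : ℝ) (hCf0 : 0 ≤ Cf) (hCf : ∀ f ∈ F, ∀ x : X, |f x| ≤ Cf)
    (N : ℕ) (hN : 0 < N) (δ : ℝ) (hδ : 0 < δ) :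
    ∃ (M : ℕ), 0 < M ∧ ∃ y : Fin M → X, ∀ f ∈ F,
      |(M : ℝ)⁻¹ * ∑ r : Fin M, ((N : ℝ)⁻¹ * ∑ t ∈ Finset.range N, f ((⇑T)^[t] (y r))) -
        ∫ x, f x ∂(μ : Measure X)| < δ := by
  classical
  set Φ : X → (↥F → ℝ) := fun x g => (N : ℝ)⁻¹ * ∑ t ∈ Finset.range N, g.1 ((⇑T)^[t] x) with hΦ
  have hΦcont : Continuous Φ := by
    apply continuous_pi
    intro g
    exact continuous_const.mul (continuous_finset_sum _ fun t _ =>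
      g.1.continuous.comp (T.continuous.iterate t))
  have hΦbdd : ∀ x : X, ‖Φ x‖ ≤ Cf := by
    intro x
    rw [pi_norm_le_iff_of_nonneg hCf0]
    intro g
    rw [Real.norm_eq_abs, hΦ]
    calc |(N : ℝ)⁻¹ * ∑ t ∈ Finset.range N, g.1 ((⇑T)^[t] x)|
        ≤ (N : ℝ)⁻¹ * ∑ t ∈ Finset.range N, |g.1 ((⇑T)^[t] x)| := by
          rw [abs_mul, abs_inv, Nat.abs_cast]
          exact mul_le_mul_of_nonneg_left (Finset.abs_sum_le_sum_abs _ _)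
            (by positivity)
      _ ≤ (N : ℝ)⁻¹ * ∑ _t ∈ Finset.range N, Cf := by
          apply mul_le_mul_of_nonneg_left _ (by positivity)
          exact Finset.sum_le_sum fun t _ => hCf g.1 g.2 _
      _ = Cf := by
          rw [Finset.sum_const, Finset.card_range, nsmul_eq_mul, ← mul_assoc,
            inv_mul_cancel₀ (by exact_mod_cast hN.ne')]
          ring
  have hint : Integrable Φ (μ : Measure X) :=
    (BoundedContinuousFunction.mkOfCompact ⟨Φ, hΦcont⟩).integrable _
  set v : ↥F → ℝ := fun g => ∫ x, g.1 x ∂(μ : Measure X) with hvdef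
  have hv : (∫ x, Φ x ∂(μ : Measure X)) = v := by
    funext g
    have h1 : (∫ x, Φ x ∂(μ : Measure X)) g =
        ∫ x, Φ x g ∂(μ : Measure X) := by
      exact (ContinuousLinearMap.integral_comp_comm (ContinuousLinearMap.proj (R := ℝ) g)
        hint).symm
    rw [h1, hvdef]
    simp only [hΦ]
    have hint' : ∀ t ∈ Finset.range N, Integrable (fun x : X => g.1 ((⇑T)^[t] x))
        (μ : Measure X) := fun t _ => (g.1.compContinuous ⟨_, T.continuous.iterate t⟩).integrable _
    rw [integral_const_mul, integral_finset_sum _ hint']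
    have h2 : ∀ t ∈ Finset.range N, (∫ x, g.1 ((⇑T)^[t] x) ∂(μ : Measure X)) =
        ∫ x, g.1 x ∂(μ : Measure X) := fun t _ => integral_iterate' T _ hμ t g.1
    rw [Finset.sum_congr rfl h2, Finset.sum_const, Finset.card_range, nsmul_eq_mul,
      ← mul_assoc, inv_mul_cancel₀ (by exact_mod_cast hN.ne'), one_mul]
  have hmemv : v ∈ closure (convexHull ℝ (Set.range Φ)) := by
    have := (convex_convexHull ℝ (Set.range Φ)).closure.integral_mem isClosed_closure
      (Filter.Eventually.of_forall fun x =>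
        subset_closure (subset_convexHull ℝ _ (Set.mem_range_self x))) hint
    rwa [hv] at this
  obtain ⟨w, hw, hwv⟩ := Metric.mem_closure_iff.mp hmemv (δ / 2) (by linarith)
  obtain ⟨ι, hι, wt, z, hwt0, hwt1, hz, hzsum⟩ := mem_convexHull_iff_exists_fintype.mp hw
  choose u hu using fun k => hz k
  haveI : Nonempty ι := by
    by_contra h
    rw [not_nonempty_iff] at h
    rw [Finset.univ_eq_empty, Finset.sum_empty] at hwt1
    exact zero_ne_one hwt1
  set m' : ℕ := Fintype.card ι with hm'
  obtain ⟨Q, hQgt⟩ := exists_nat_gt (max 1 (2 * m' * (Cf + 1) / (δ / 2)))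
  have hQ1 : (1 : ℝ) < Q := lt_of_le_of_lt (le_max_left _ _) hQgt
  have hQ0 : (0 : ℝ) < Q := by linarith
  set c : ι → ℕ := fun k => ⌊wt k * Q⌋₊ + 1 with hc
  set M : ℕ := ∑ k, c k with hM
  have hcast : (M : ℝ) = ∑ k, (c k : ℝ) := by rw [hM]; push_cast; rfl
  have hckQ : ∀ k, wt k * Q < c k := by
    intro k
    rw [hc]
    push_cast
    exact Nat.lt_floor_add_one _
  have hckQ' : ∀ k, (c k : ℝ) ≤ wt k * Q + 1 := by
    intro k
    rw [hc]
    push_cast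
    have := Nat.floor_le (mul_nonneg (hwt0 k) hQ0.le)
    linarith
  have hQM : (Q : ℝ) < M := by
    rw [hcast]
    calc (Q : ℝ) = ∑ k, wt k * Q := by rw [← Finset.sum_mul, hwt1, one_mul]
      _ < ∑ k, (c k : ℝ) := Finset.sum_lt_sum_of_nonempty Finset.univ_nonempty
          fun k _ => hckQ k
  have hMQ : (M : ℝ) ≤ Q + m' := by
    rw [hcast]
    calc (∑ k, (c k : ℝ)) ≤ ∑ k, (wt k * Q + 1) := Finset.sum_le_sum fun k _ => hckQ' k
      _ = Q + m' := by
          rw [Finset.sum_add_distrib, ← Finset.sum_mul, hwt1, one_mul, Finset.sum_const,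
            Finset.card_univ, nsmul_eq_mul, mul_one, hm']
  have hM0 : 0 < M := by exact_mod_cast lt_trans hQ0 hQM
  have hM0' : (0 : ℝ) < M := lt_trans hQ0 hQM
  have hkerr : ∀ k, |(c k : ℝ) / M - wt k| ≤ (1 + wt k * m') / M := by
    intro k
    have heq : (c k : ℝ) / M - wt k = ((c k : ℝ) - wt k * M) / M := by
      field_simp
    have habs : |(c k : ℝ) - wt k * M| ≤ 1 + wt k * m' := by
      have h1 : (c k : ℝ) - wt k * M ≤ 1 := by
        have := hckQ' k
        have h2 : wt k * Q ≤ wt k * M := mul_le_mul_of_nonneg_left hQM.le (hwt0 k)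
        linarith
      have h3 : -(1 + wt k * m') ≤ (c k : ℝ) - wt k * M := by
        have := hckQ k
        have h4 : wt k * M ≤ wt k * (Q + m') := mul_le_mul_of_nonneg_left hMQ (hwt0 k)
        nlinarith [hwt0 k]
      rw [abs_le]
      refine ⟨h3, ?_⟩
      have hm0 : (0 : ℝ) ≤ wt k * m' := mul_nonneg (hwt0 k) (by positivity)
      linarith
    rw [heq, abs_div, abs_of_pos hM0']
    exact (div_le_div_iff_of_pos_right hM0').mpr habs
  have hsumerr : ∑ k, |(c k : ℝ) / M - wt k| ≤ 2 * m' / M := by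
    calc ∑ k, |(c k : ℝ) / M - wt k| ≤ ∑ k, (1 + wt k * m') / M :=
          Finset.sum_le_sum fun k _ => hkerr k
      _ = 2 * m' / M := by
          rw [← Finset.sum_div]
          congr 1
          rw [Finset.sum_add_distrib, Finset.sum_const, Finset.card_univ, nsmul_eq_mul,
            mul_one, ← Finset.sum_mul, hwt1, one_mul, hm']
          ring
  have hcardI : Fintype.card (Σ k : ι, Fin (c k)) = M := by
    rw [Fintype.card_sigma]
    simp [hM]
  set e : (Σ k : ι, Fin (c k)) ≃ Fin M := Fintype.equivFinOfCardEq hcardI with he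
  set y : Fin M → X := fun r => u (e.symm r).1 with hy
  have hysum : (∑ r : Fin M, Φ (y r)) = ∑ k, (c k : ℝ) • z k := by
    have h1 : (∑ r : Fin M, Φ (y r)) = ∑ p : (Σ k : ι, Fin (c k)), Φ (u p.1) :=
      Equiv.sum_comp e.symm fun p => Φ (u p.1)
    rw [h1, ← Finset.univ_sigma_univ, Finset.sum_sigma]
    refine Finset.sum_congr rfl fun k _ => ?_
    rw [Finset.sum_congr rfl fun (b : Fin (c k)) _ => (hu k : Φ (u k) = z k)]
    rw [Finset.sum_const, Finset.card_univ, Fintype.card_fin,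
      ← Nat.cast_smul_eq_nsmul ℝ]
  set Wvec : ↥F → ℝ := (M : ℝ)⁻¹ • ∑ r : Fin M, Φ (y r) with hW
  have hWw : ‖Wvec - w‖ < δ / 2 := by
    have e1 : Wvec = ∑ k, ((c k : ℝ) / M) • z k := by
      rw [hW, hysum, Finset.smul_sum]
      refine Finset.sum_congr rfl fun k _ => ?_
      rw [smul_smul, div_eq_inv_mul]
    have h1 : Wvec - w = ∑ k, ((c k : ℝ) / M - wt k) • z k := by
      rw [e1, ← hzsum, ← Finset.sum_sub_distrib]
      refine Finset.sum_congr rfl fun k _ => ?_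
      rw [sub_smul]
    rw [h1]
    calc ‖∑ k, ((c k : ℝ) / M - wt k) • z k‖ ≤ ∑ k, ‖((c k : ℝ) / M - wt k) • z k‖ :=
          norm_sum_le _ _
      _ ≤ ∑ k, |(c k : ℝ) / M - wt k| * Cf := by
          apply Finset.sum_le_sum
          intro k _
          rw [norm_smul, Real.norm_eq_abs]
          apply mul_le_mul_of_nonneg_left _ (abs_nonneg _)
          rw [← hu k]
          exact hΦbdd (u k)
      _ = (∑ k, |(c k : ℝ) / M - wt k|) * Cf := by rw [Finset.sum_mul]
      _ ≤ (2 * m' / M) * Cf := mul_le_mul_of_nonneg_right hsumerr hCf0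
      _ < δ / 2 := by
          have hs : 2 * m' / M * Cf ≤ 2 * m' * (Cf + 1) / Q := by
            rw [div_mul_eq_mul_div, div_le_div_iff₀ hM0' hQ0]
            have hm0 : (0 : ℝ) ≤ m' := by positivity
            have ha : 2 * (m' : ℝ) * Cf * Q ≤ 2 * m' * Cf * M :=
              mul_le_mul_of_nonneg_left hQM.le (mul_nonneg (by positivity) hCf0)
            have hb : 2 * (m' : ℝ) * Cf * M ≤ 2 * m' * (Cf + 1) * M :=
              mul_le_mul_of_nonneg_right (by nlinarith) hM0'.le
            linarith
          have hq : 2 * m' * (Cf + 1) / Q < δ / 2 := by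
            rw [div_lt_iff₀ hQ0]
            have := lt_of_le_of_lt (le_max_right 1 (2 * m' * (Cf + 1) / (δ / 2))) hQgt
            rw [div_lt_iff₀ (by linarith : (0:ℝ) < δ / 2)] at this
            nlinarith
          linarith
  refine ⟨M, hM0, y, ?_⟩
  intro f hf
  have hg : dist (Wvec ⟨f, hf⟩) (v ⟨f, hf⟩) ≤ dist Wvec v := dist_le_pi_dist Wvec v ⟨f, hf⟩
  have hdist : dist Wvec v < δ := by
    calc dist Wvec v ≤ dist Wvec w + dist w v := dist_triangle _ _ _
      _ < δ / 2 + δ / 2 := by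
          apply add_lt_add
          · rw [dist_eq_norm]; exact hWw
          · rw [dist_comm]; exact hwv
      _ = δ := by ring
  have hWf : Wvec ⟨f, hf⟩ =
      (M : ℝ)⁻¹ * ∑ r : Fin M, ((N : ℝ)⁻¹ * ∑ t ∈ Finset.range N, f ((⇑T)^[t] (y r))) := by
    rw [hW]
    simp only [Pi.smul_apply, Finset.sum_apply, smul_eq_mul]
    rfl
  have hvf : v ⟨f, hf⟩ = ∫ x, f x ∂(μ : Measure X) := rfl
  rw [← hWf, ← hvf, ← Real.dist_eq]
  exact lt_of_le_of_lt hg hdist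

omit [CompactSpace X] [MeasurableSpace X] [BorelSpace X] in
/-- A common modulus of uniform continuity for finitely many functions. -/
lemma unif_cont_finset [CompactSpace X] (F : Finset (X →ᵇ ℝ)) (ε₁ : ℝ) (hε₁ : 0 < ε₁) :
    ∃ η : ℝ, 0 < η ∧ ∀ f ∈ F, ∀ u v : X, dist u v < η → |f u - f v| < ε₁ := by
  classical
  induction F using Finset.induction with
  | empty => exact ⟨1, one_pos, by simp⟩
  | @insert f F hfF ih =>
    obtain ⟨η₀, hη₀, hF⟩ := ih
    have huc : UniformContinuous f :=
      CompactSpace.uniformContinuous_of_continuous f.continuous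
    obtain ⟨δ, hδ, hfδ⟩ := Metric.uniformContinuous_iff.mp huc ε₁ hε₁
    refine ⟨min δ η₀, lt_min hδ hη₀, ?_⟩
    intro g hg u v huv
    rcases Finset.mem_insert.mp hg with rfl | hg
    · rw [← Real.dist_eq]
      exact hfδ (lt_of_lt_of_le huv (min_le_left _ _))
    · exact hF g hg u v (lt_of_lt_of_le huv (min_le_right _ _))

/-- The purely arithmetic part of the final estimate. -/
lemma arith_est (p m n d Cf ε s1 s2 s3 : ℝ) (hm : 1 ≤ m) (hn : 1 ≤ n) (hd : 1 ≤ d)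
    (hCf : 1 ≤ Cf) (hε : 0 < ε) (hp : p = m * (n + d) - 1)
    (h12 : |s1 - s2| ≤ m * d * Cf) (h23 : |s2 - s3| ≤ m * n * (ε / 4))
    (h3 : |s3| ≤ m * n * Cf) (hnε : 8 * d * Cf < n * ε) :
    |p⁻¹ * s1 - (m * n)⁻¹ * s3| < 3 * (ε / 4) := by
  have hmn : (0 : ℝ) < m * n := by nlinarith
  have hpge : m * n ≤ p := by nlinarith
  have hp0 : (0 : ℝ) < p := lt_of_lt_of_le hmn hpge
  have hterm1 : p⁻¹ * (m * d * Cf) < ε / 4 := by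
    rw [inv_mul_eq_div, div_lt_iff₀ hp0]
    have h1 : ε / 4 * (m * n) ≤ ε / 4 * p :=
      mul_le_mul_of_nonneg_left hpge (by positivity)
    have h2 : m * d * Cf < ε / 4 * (m * n) := by nlinarith
    linarith
  have hterm2 : p⁻¹ * (m * n * (ε / 4)) ≤ ε / 4 := by
    rw [inv_mul_eq_div, div_le_iff₀ hp0]
    nlinarith
  have hnonneg : (0 : ℝ) ≤ (m * n)⁻¹ - p⁻¹ := by
    rw [sub_nonneg]
    exact inv_anti₀ hmn hpge
  have hterm3 : ((m * n)⁻¹ - p⁻¹) * |s3| < ε / 4 := by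
    have hdiff : (m * n)⁻¹ - p⁻¹ = (p - m * n) / (m * n * p) := by
      field_simp
    have hps : p - m * n ≤ m * d := by nlinarith
    calc ((m * n)⁻¹ - p⁻¹) * |s3| ≤ ((m * n)⁻¹ - p⁻¹) * (m * n * Cf) :=
          mul_le_mul_of_nonneg_left h3 hnonneg
      _ = ((p - m * n) / p) * Cf := by
          rw [hdiff]
          field_simp
      _ ≤ ((m * d) / p) * Cf := by
          apply mul_le_mul_of_nonneg_right _ (by linarith)
          gcongr
      _ < ε / 4 := by
          rw [div_mul_eq_mul_div, div_lt_iff₀ hp0]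
          have h1 : ε / 4 * (m * n) ≤ ε / 4 * p :=
            mul_le_mul_of_nonneg_left hpge (by positivity)
          have h2 : m * d * Cf < ε / 4 * (m * n) := by nlinarith
          linarith
  have ha : |p⁻¹ * s1 - p⁻¹ * s2| < ε / 4 := by
    rw [← mul_sub, abs_mul, abs_of_pos (inv_pos.mpr hp0)]
    exact lt_of_le_of_lt (mul_le_mul_of_nonneg_left h12 (inv_pos.mpr hp0).le) hterm1
  have hb : |p⁻¹ * s2 - p⁻¹ * s3| ≤ ε / 4 := by
    rw [← mul_sub, abs_mul, abs_of_pos (inv_pos.mpr hp0)]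
    exact le_trans (mul_le_mul_of_nonneg_left h23 (inv_pos.mpr hp0).le) hterm2
  have hc : |p⁻¹ * s3 - (m * n)⁻¹ * s3| < ε / 4 := by
    rw [← sub_mul, abs_mul, abs_sub_comm, abs_of_nonneg hnonneg]
    exact hterm3
  have t1 := abs_sub_le (p⁻¹ * s1) (p⁻¹ * s3) ((m * n)⁻¹ * s3)
  have t2 := abs_sub_le (p⁻¹ * s1) (p⁻¹ * s2) (p⁻¹ * s3)
  linarith

end Aux

/-- if `(X, T)` has the periodic specification property, then the set
`M_T^co(X)` of invariant measures supported on a single periodic orbit is dense in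
`M_T(X)` for the weak* topology. -/
theorem stmt6
    {X : Type*} [MetricSpace X] [CompactSpace X] [MeasurableSpace X] [BorelSpace X]
    (T : X ≃ₜ X) (hspec : PerSpecProp T) :
    invMeas (⇑T) ⊆ closure (Mco ⇑T) := by
  intro μ hμ
  have hμ' : (μ : Measure X).map ⇑T = (μ : Measure X) := hμ
  apply pm_mem_closure'
  intro F ε hε
  classical
  set Cf : ℝ := 1 + ∑ f ∈ F, ‖f‖ with hCfdef
  have hsum0 : 0 ≤ ∑ f ∈ F, ‖f‖ := Finset.sum_nonneg fun f _ => norm_nonneg f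
  have hCf1 : 1 ≤ Cf := by rw [hCfdef]; linarith
  have hCf : ∀ f ∈ F, ∀ x : X, |f x| ≤ Cf := by
    intro f hf x
    have h1 : |f x| ≤ ‖f‖ := by
      rw [← Real.norm_eq_abs]
      exact BoundedContinuousFunction.norm_coe_le_norm f x
    have h2 : ‖f‖ ≤ ∑ g ∈ F, ‖g‖ := Finset.single_le_sum (fun g _ => norm_nonneg g) hf
    rw [hCfdef]
    linarith
  obtain ⟨η, hη, hunif⟩ := unif_cont_finset F (ε / 4) (by linarith)
  obtain ⟨D, hD, hs⟩ := hspec η hη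
  obtain ⟨N, hNgt⟩ := exists_nat_gt (max 1 (8 * D * Cf / ε))
  have hN1 : (1 : ℝ) < N := lt_of_le_of_lt (le_max_left _ _) hNgt
  have hN : 0 < N := by
    have h0 : (0 : ℝ) < N := by linarith
    exact_mod_cast h0
  obtain ⟨M, hM, y, hy⟩ := convex_round' T μ hμ' F Cf (by linarith) hCf N hN (ε / 4)
    (by linarith)
  obtain ⟨x', htr, hper⟩ := spec_apply' hs M N hM hN y
  set P : ℕ := M * (N + D) - 1 with hPdef
  have hMND : 2 ≤ M * (N + D) := by
    have h2 : 2 ≤ N + D := by omega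
    calc 2 = 1 * 2 := by ring
      _ ≤ M * (N + D) := Nat.mul_le_mul hM h2
  have hP : 0 < P := by omega
  have hPM : IsProbabilityMeasure
      ((P : ℝ≥0∞)⁻¹ • ∑ j ∈ Finset.range P, Measure.dirac ((⇑T)^[j] x')) :=
    per_prob' T x' P hP
  refine ⟨⟨_, hPM⟩, ⟨P, x', hP, hper, rfl⟩, ?_⟩
  intro f hf
  have hC' : ∀ x, |f x| ≤ Cf := hCf f hf
  set s1 : ℝ := ∑ j ∈ Finset.range P, f ((⇑T)^[j] x') with hs1
  set s2 : ℝ := ∑ i ∈ Finset.range M, ∑ t ∈ Finset.range N, f ((⇑T)^[i * (N + D) + t] x')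
    with hs2
  set s3 : ℝ := ∑ i : Fin M, ∑ t ∈ Finset.range N, f ((⇑T)^[t] (y i)) with hs3
  have h12 : |s1 - s2| ≤ (M : ℝ) * (D : ℝ) * Cf := by
    have := block_sum_est' T (⇑f) Cf hC' M N D hM hN hD x'
    rw [hs1, hs2]
    calc |s1 - s2| ≤ ((M * D : ℕ) : ℝ) * Cf := by
          push_cast
          push_cast at this
          exact this
      _ = (M : ℝ) * (D : ℝ) * Cf := by push_cast; ring
  have hs2fin : s2 = ∑ i : Fin M, ∑ t ∈ Finset.range N, f ((⇑T)^[(i : ℕ) * (N + D) + t] x') := by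
    rw [hs2, ← Fin.sum_univ_eq_sum_range (fun i => ∑ t ∈ Finset.range N,
      f ((⇑T)^[i * (N + D) + t] x'))]
  have h23 : |s2 - s3| ≤ (M : ℝ) * (N : ℝ) * (ε / 4) := by
    rw [hs2fin, hs3, ← Finset.sum_sub_distrib]
    calc |∑ i : Fin M, ((∑ t ∈ Finset.range N, f ((⇑T)^[(i : ℕ) * (N + D) + t] x')) -
            ∑ t ∈ Finset.range N, f ((⇑T)^[t] (y i)))|
        ≤ ∑ i : Fin M, |(∑ t ∈ Finset.range N, f ((⇑T)^[(i : ℕ) * (N + D) + t] x')) -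
            ∑ t ∈ Finset.range N, f ((⇑T)^[t] (y i))| := Finset.abs_sum_le_sum_abs _ _
      _ ≤ ∑ _i : Fin M, (N : ℝ) * (ε / 4) := by
          apply Finset.sum_le_sum
          intro i _
          rw [← Finset.sum_sub_distrib]
          calc |∑ t ∈ Finset.range N, (f ((⇑T)^[(i : ℕ) * (N + D) + t] x') -
                  f ((⇑T)^[t] (y i)))|
              ≤ ∑ t ∈ Finset.range N, |f ((⇑T)^[(i : ℕ) * (N + D) + t] x') -
                  f ((⇑T)^[t] (y i))| := Finset.abs_sum_le_sum_abs _ _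
            _ ≤ ∑ _t ∈ Finset.range N, (ε / 4) := by
                apply Finset.sum_le_sum
                intro t ht
                exact (hunif f hf _ _ (htr i t (Finset.mem_range.mp ht))).le
            _ = (N : ℝ) * (ε / 4) := by
                rw [Finset.sum_const, Finset.card_range, nsmul_eq_mul]
      _ = (M : ℝ) * (N : ℝ) * (ε / 4) := by
          rw [Finset.sum_const, Finset.card_univ, Fintype.card_fin, nsmul_eq_mul]
          ring
  have h3 : |s3| ≤ (M : ℝ) * (N : ℝ) * Cf := by
    rw [hs3]
    calc |∑ i : Fin M, ∑ t ∈ Finset.range N, f ((⇑T)^[t] (y i))|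
        ≤ ∑ i : Fin M, |∑ t ∈ Finset.range N, f ((⇑T)^[t] (y i))| :=
          Finset.abs_sum_le_sum_abs _ _
      _ ≤ ∑ _i : Fin M, (N : ℝ) * Cf := by
          apply Finset.sum_le_sum
          intro i _
          calc |∑ t ∈ Finset.range N, f ((⇑T)^[t] (y i))|
              ≤ ∑ t ∈ Finset.range N, |f ((⇑T)^[t] (y i))| := Finset.abs_sum_le_sum_abs _ _
            _ ≤ ∑ _t ∈ Finset.range N, Cf := Finset.sum_le_sum fun t _ => hC' _
            _ = (N : ℝ) * Cf := by rw [Finset.sum_const, Finset.card_range, nsmul_eq_mul]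
      _ = (M : ℝ) * (N : ℝ) * Cf := by
          rw [Finset.sum_const, Finset.card_univ, Fintype.card_fin, nsmul_eq_mul]
          ring
  have hWeq : (M : ℝ)⁻¹ * ∑ r : Fin M, ((N : ℝ)⁻¹ *
      ∑ t ∈ Finset.range N, f ((⇑T)^[t] (y r))) = ((M : ℝ) * (N : ℝ))⁻¹ * s3 := by
    rw [hs3, ← Finset.mul_sum, mul_inv, mul_assoc]
  have hpcast : (P : ℝ) = (M : ℝ) * ((N : ℝ) + (D : ℝ)) - 1 := by
    rw [hPdef]
    push_cast [Nat.cast_sub (by omega : 1 ≤ M * (N + D))]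
    ring
  have hm1 : (1 : ℝ) ≤ M := by exact_mod_cast hM
  have hd1 : (1 : ℝ) ≤ D := by exact_mod_cast hD
  have hnε : 8 * (D : ℝ) * Cf < (N : ℝ) * ε := by
    have h1 : 8 * (D : ℝ) * Cf / ε < N := lt_of_le_of_lt (le_max_right _ _) hNgt
    rw [div_lt_iff₀ hε] at h1
    linarith [h1]
  have harith := arith_est (P : ℝ) (M : ℝ) (N : ℝ) (D : ℝ) Cf ε s1 s2 s3 hm1 hN1.le hd1
    hCf1 hε hpcast h12 h23 h3 hnε
  have hWest := hy f hf
  rw [hWeq] at hWest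
  show |(∫ x, f x ∂((P : ℝ≥0∞)⁻¹ • ∑ j ∈ Finset.range P, Measure.dirac ((⇑T)^[j] x'))) -
      ∫ x, f x ∂(μ : Measure X)| < ε
  rw [per_integral' T x' P f, ← hs1]
  have hfinal := abs_sub_le ((P : ℝ)⁻¹ * s1) (((M : ℝ) * (N : ℝ))⁻¹ * s3)
    (∫ x, f x ∂(μ : Measure X))
  calc |(P : ℝ)⁻¹ * s1 - ∫ x, f x ∂(μ : Measure X)|
      ≤ |(P : ℝ)⁻¹ * s1 - ((M : ℝ) * (N : ℝ))⁻¹ * s3| +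
        |((M : ℝ) * (N : ℝ))⁻¹ * s3 - ∫ x, f x ∂(μ : Measure X)| := hfinal
    _ < 3 * (ε / 4) + ε / 4 := add_lt_add harith hWest
    _ = ε := by ring
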